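/- Let $X$ be an irreducible ergodic Markov chain on finite state space $S$ with transition matrix $P$ and stationary distribution $\pi$, started from $X_0 \sim \pi^{(j)}$, where $j$ satisfies $\pi_y \mathbb{P}(X_t = j) \le \pi_j \mathbb{P}(X_t = y)$ for all $t \ge 0$ and $y \in S$. Then the diagonal transition probability $P^t(j,j)$ is non-increasing in $t$. -/

import Mathlib

open MeasureTheory Finset

/-- Under the hypotheses of Lemma 1.2 (chain started from `π^{(j)}`, with
`π_y ℙ(X_t = j) ≤ π_j ℙ(X_t = y)` for all `t, y`), the diagonal transition probability
`P^t(j,j)` is non-increasing in `t`. -/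
theorem diag_antitone {S : Type*} [Fintype S] [DecidableEq S] [Nonempty S]
    (P : Matrix S S ℝ) (π : S → ℝ) (j : S)
    (hP0 : ∀ i k, 0 ≤ P i k) (hP1 : ∀ i, ∑ k, P i k = 1)
    (hirr : ∀ i k, ∃ t, 0 < (P ^ t) i k)
    (herg : ∃ t, ∀ i k, 0 < (P ^ t) i k)
    (hπpos : ∀ s, 0 < π s) (hπsum : ∑ s, π s = 1)
    (hstat : Matrix.vecMul π P = π) (hπj : π j < 1)
    (ν : ℕ → S → ℝ)
    (hν : ∀ t, ν t = Matrix.vecMul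
      (fun s => (π s - if s = j then π j else 0) / (1 - π j)) (P ^ t))
    (hineq : ∀ (t : ℕ) (y : S), π y * ν t j ≤ π j * ν t y) :
    ∀ t : ℕ, (P ^ (t + 1)) j j ≤ (P ^ t) j j := by
  have hπj' : 0 < 1 - π j := by linarith
  have hπjpos := hπpos j
  -- stationarity for all powers
  have hπP : ∀ t : ℕ, Matrix.vecMul π (P ^ t) = π := by
    intro t
    induction t with
    | zero => simp
    | succ n ih => rw [pow_succ, ← Matrix.vecMul_vecMul, ih, hstat]
  have hsumP : ∀ t : ℕ, ∑ s, π s * (P ^ t) s j = π j := by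
    intro t
    have := congrFun (hπP t) j
    simpa [Matrix.vecMul, dotProduct] using this
  -- key formula
  have hform : ∀ t : ℕ, π j * (P ^ t) j j = π j - (1 - π j) * ν t j := by
    intro t
    have h1 : ν t j = (π j - π j * (P ^ t) j j) / (1 - π j) := by
      rw [hν t]
      simp only [Matrix.vecMul, dotProduct]
      rw [show (∑ s, (π s - if s = j then π j else 0) / (1 - π j) * (P ^ t) s j)
          = (∑ s, (π s * (P ^ t) s j - (if s = j then π j else 0) * (P ^ t) s j)) / (1 - π j) by
        rw [Finset.sum_div]; exact Finset.sum_congr rfl fun s _ => by ring]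
      rw [Finset.sum_sub_distrib, hsumP t]
      congr 2
      rw [Finset.sum_eq_single j]
      · simp
      · intro b _ hb; simp [hb]
      · intro h; exact absurd (Finset.mem_univ j) h
    rw [h1]
    field_simp
    ring
  -- monotonicity of ν · j
  have hmono : ∀ t : ℕ, ν t j ≤ ν (t + 1) j := by
    intro t
    have hsucc : ν (t + 1) j = ∑ y, ν t y * P y j := by
      rw [hν (t + 1), pow_succ, ← Matrix.vecMul_vecMul, ← hν t]
      simp [Matrix.vecMul, dotProduct]
    have hsum1 : ∑ y, π y * P y j = π j := by
      have := congrFun hstat j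
      simpa [Matrix.vecMul, dotProduct] using this
    calc ν t j = (∑ y, π y * P y j) / π j * ν t j := by
            rw [hsum1]; field_simp
      _ = ∑ y, (π y * ν t j / π j) * P y j := by
            rw [Finset.sum_div, Finset.sum_mul]
            exact Finset.sum_congr rfl fun y _ => by ring
      _ ≤ ∑ y, ν t y * P y j := by
            refine Finset.sum_le_sum fun y _ => ?_
            refine mul_le_mul_of_nonneg_right ?_ (hP0 y j)
            rw [div_le_iff₀ hπjpos]
            calc π y * ν t j ≤ π j * ν t y := hineq t y
              _ = ν t y * π j := by ring
      _ = ν (t + 1) j := hsucc.symm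
  intro t
  have h1 := hform t
  have h2 := hform (t + 1)
  have h3 : (1 - π j) * ν t j ≤ (1 - π j) * ν (t + 1) j :=
    mul_le_mul_of_nonneg_left (hmono t) hπj'.le
  have h4 : π j * (P ^ (t + 1)) j j ≤ π j * (P ^ t) j j := by linarith
  exact le_of_mul_le_mul_left h4 hπjpos
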